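/- If Hx and Hy have equal order in G/H, then for every subgroup K with H ≤ K ≤ G, the number of G-conjugacy classes contained in Hx whose centralizing subgroup is K equals the number of G-conjugacy classes contained in Hy whose centralizing subgroup is K. -/
import Mathlib

open Subgroup

/-- In a finite cyclic group, if the order of `b` divides the order of `a`, then `b` is a
power of `a`. -/
private lemma mem_zpowers_of_orderOf_dvd {α : Type*} [Group α] [Finite α] (hc : IsCyclic α)
    {a b : α} (h : orderOf b ∣ orderOf a) : b ∈ Subgroup.zpowers a := by
  obtain ⟨t, ht⟩ := hc.exists_generator
  have hn : orderOf t = Nat.card α := orderOf_eq_card_of_forall_mem_zpowers ht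
  have hnpos : 0 < orderOf t := orderOf_pos t
  obtain ⟨i, hi⟩ := (mem_powers_iff_mem_zpowers.2 (ht a))
  obtain ⟨j, hj⟩ := (mem_powers_iff_mem_zpowers.2 (ht b))
  dsimp only at hi hj
  set n := orderOf t with hnn
  -- first, `t ^ (Nat.gcd n i) ∈ zpowers (t ^ i)` by Bezout
  have key : ∀ i : ℕ, t ^ (Nat.gcd n i) ∈ Subgroup.zpowers (t ^ i) := by
    intro i
    have hb : ((Nat.gcd n i : ℤ)) = n * Nat.gcdA n i + i * Nat.gcdB n i := Nat.gcd_eq_gcd_ab n i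
    have : t ^ ((Nat.gcd n i : ℤ)) = (t ^ (i : ℤ)) ^ (Nat.gcdB n i) := by
      rw [hb, zpow_add, zpow_mul, zpow_mul, zpow_natCast, pow_orderOf_eq_one, one_zpow, one_mul]
    rw [← zpow_natCast t (Nat.gcd n i), this, zpow_natCast]
    exact zpow_mem (Subgroup.mem_zpowers (t ^ i)) (Nat.gcdB n i)
  -- orders
  have horda : orderOf a = n / Nat.gcd n i := by rw [← hi, orderOf_pow]
  have hordb : orderOf b = n / Nat.gcd n j := by rw [← hj, orderOf_pow]
  -- `Nat.gcd n i ∣ Nat.gcd n j`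
  have hdvd : Nat.gcd n i ∣ Nat.gcd n j := by
    rw [horda, hordb] at h
    obtain ⟨k, hk⟩ := h
    refine ⟨k, ?_⟩
    have h1 : n / Nat.gcd n i * Nat.gcd n i = n := Nat.div_mul_cancel (Nat.gcd_dvd_left n i)
    have h2 : n / Nat.gcd n j * Nat.gcd n j = n := Nat.div_mul_cancel (Nat.gcd_dvd_left n j)
    have hpos : 0 < n / Nat.gcd n j :=
      Nat.div_pos (Nat.le_of_dvd hnpos (Nat.gcd_dvd_left n j)) (Nat.gcd_pos_of_pos_left j hnpos)
    apply Nat.eq_of_mul_eq_mul_left hpos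
    calc n / Nat.gcd n j * Nat.gcd n j = n := h2
      _ = n / Nat.gcd n i * Nat.gcd n i := h1.symm
      _ = n / Nat.gcd n j * k * Nat.gcd n i := by rw [← hk]
      _ = n / Nat.gcd n j * (k * Nat.gcd n i) := by ring
      _ = n / Nat.gcd n j * (Nat.gcd n i * k) := by ring
  -- conclude
  have hj' : Nat.gcd n i ∣ j := hdvd.trans (Nat.gcd_dvd_right n j)
  obtain ⟨c, hc'⟩ := hj'
  have : b = (t ^ Nat.gcd n i) ^ c := by rw [← pow_mul, ← hc', hj]
  rw [this]
  have ha : Subgroup.zpowers (t ^ Nat.gcd n i) ≤ Subgroup.zpowers a := by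
    rw [← hi]
    exact Subgroup.zpowers_le.2 (key i)
  exact ha (pow_mem (Subgroup.mem_zpowers _) c)

private lemma centralizer_pow_eq {G : Type*} [Group G] (a b : ℕ)
    (hab : ∀ g : G, (g ^ a) ^ b = g) (g : G) :
    Subgroup.centralizer {g ^ a} = Subgroup.centralizer {g} := by
  ext c
  simp only [Subgroup.mem_centralizer_singleton_iff]
  constructor
  · intro h
    have h1 : Commute c (g ^ a) := h
    have h2 : Commute c ((g ^ a) ^ b) := h1.pow_right b
    rw [hab] at h2
    exact h2
  · intro h
    have h1 : Commute c g := h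
    exact h1.pow_right a

/-- If `Hx` and `Hy` have equal order in the cyclic quotient `G/H`, then for every
subgroup `K` with `H ≤ K ≤ G`, the number of `G`-conjugacy classes contained in `Hx`
whose centralizing subgroup `H·C_G(g)` is `K` equals the corresponding number for `Hy`. -/
theorem stmt5 {G : Type*} [Group G] [Finite G] (H : Subgroup G) [H.Normal]
    (hcyc : IsCyclic (G ⧸ H)) (x y : G)
    (hord : orderOf (QuotientGroup.mk x : G ⧸ H) = orderOf (QuotientGroup.mk y : G ⧸ H))
    (K : Subgroup G) (hHK : H ≤ K) :
    Nat.card {C : ConjClasses G //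
        C.carrier ⊆ {g : G | (QuotientGroup.mk g : G ⧸ H) = QuotientGroup.mk x} ∧
        ∀ g ∈ C.carrier, H ⊔ Subgroup.centralizer {g} = K} =
    Nat.card {C : ConjClasses G //
        C.carrier ⊆ {g : G | (QuotientGroup.mk g : G ⧸ H) = QuotientGroup.mk y} ∧
        ∀ g ∈ C.carrier, H ⊔ Subgroup.centralizer {g} = K} := by
  classical
  set N := Nat.card G with hN
  have hNpos : 0 < N := Nat.card_pos
  haveI : NeZero N := ⟨hNpos.ne'⟩
  set xb : G ⧸ H := QuotientGroup.mk x with hxb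
  set yb : G ⧸ H := QuotientGroup.mk y with hyb
  set d := orderOf xb with hd
  have hdpos : 0 < d := orderOf_pos xb
  have hdN : d ∣ N := by
    refine (orderOf_dvd_natCard xb).trans ?_
    rw [hN, Subgroup.card_eq_card_quotient_mul_card_subgroup H]
    exact Dvd.intro _ rfl
  -- `yb` is a power of `xb`
  have hyx : yb ∈ Subgroup.zpowers xb :=
    mem_zpowers_of_orderOf_dvd hcyc (by rw [← hord])
  obtain ⟨k, hk⟩ := mem_powers_iff_mem_zpowers.2 hyx
  dsimp only at hk
  -- `k` is coprime to `d`
  have hkd : Nat.Coprime k d := by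
    have h1 : orderOf (xb ^ k) = d / Nat.gcd d k := by rw [orderOf_pow]
    rw [hk, ← hord] at h1
    have hgd : Nat.gcd d k ∣ d := Nat.gcd_dvd_left d k
    have : Nat.gcd d k * d = 1 * d := by
      rw [one_mul]
      calc Nat.gcd d k * d = Nat.gcd d k * (d / Nat.gcd d k) := by rw [← h1]
        _ = d := Nat.mul_div_cancel' hgd
    have := Nat.eq_of_mul_eq_mul_right hdpos this
    rwa [Nat.coprime_comm, Nat.Coprime]
  -- lift `k` to `m` coprime to `N` with `m ≡ k [MOD d]`
  obtain ⟨u, hu⟩ := ZMod.unitsMap_surjective hdN (ZMod.unitOfCoprime k hkd)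
  set m := (u : ZMod N).val with hm
  have hmN : Nat.Coprime m N := ZMod.val_coe_unit_coprime u
  have hmk : m ≡ k [MOD d] := by
    rw [← ZMod.natCast_eq_natCast_iff]
    have h1 : ((m : ℕ) : ZMod d) = ZMod.castHom hdN (ZMod d) (u : ZMod N) := by
      rw [hm, ZMod.natCast_val, ZMod.castHom_apply]
    have h2 : ZMod.castHom hdN (ZMod d) (u : ZMod N) = ((ZMod.unitsMap hdN u : (ZMod d)ˣ) : ZMod d) := by
      rw [ZMod.unitsMap_def]
      rfl
    rw [h1, h2, hu, ZMod.coe_unitOfCoprime]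
  -- `m'` : modular inverse of `m` mod `N`
  set m' := m ^ (N.totient - 1) with hm'
  have hmm' : m * m' ≡ 1 [MOD N] := by
    have ht : 0 < N.totient := Nat.totient_pos.2 hNpos
    have : m * m' = m ^ N.totient := by
      rw [hm', ← pow_succ']
      congr 1
      omega
    rw [this]
    exact Nat.ModEq.pow_totient hmN
  -- identities from the modular inverse
  have hmodG : ∀ g : G, orderOf g ∣ N := fun g => orderOf_dvd_natCard g
  have hidG : ∀ g : G, (g ^ m) ^ m' = g := by
    intro g
    have h := (pow_eq_pow_iff_modEq (x := g)).2 (hmm'.of_dvd (hmodG g))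
    calc (g ^ m) ^ m' = g ^ (m * m') := (pow_mul g m m').symm
      _ = g ^ 1 := h
      _ = g := pow_one g
  have hidG' : ∀ g : G, (g ^ m') ^ m = g := by
    intro g
    have h := (pow_eq_pow_iff_modEq (x := g)).2 (hmm'.of_dvd (hmodG g))
    calc (g ^ m') ^ m = g ^ (m * m') := by rw [← pow_mul, mul_comm]
      _ = g ^ 1 := h
      _ = g := pow_one g
  have hmodQ : ∀ q : G ⧸ H, orderOf q ∣ N := by
    intro q
    refine (orderOf_dvd_natCard q).trans ?_
    rw [hN, Subgroup.card_eq_card_quotient_mul_card_subgroup H]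
    exact Dvd.intro _ rfl
  have hidQ : ∀ q : G ⧸ H, (q ^ m) ^ m' = q := by
    intro q
    have h := (pow_eq_pow_iff_modEq (x := q)).2 (hmm'.of_dvd (hmodQ q))
    calc (q ^ m) ^ m' = q ^ (m * m') := (pow_mul q m m').symm
      _ = q ^ 1 := h
      _ = q := pow_one q
  -- `xb ^ m = yb` and `yb ^ m' = xb`
  have hxy : xb ^ m = yb := by
    rw [← hk, pow_eq_pow_iff_modEq]
    exact hmk
  have hyx' : yb ^ m' = xb := by rw [← hxy, hidQ]
  -- the power maps on conjugacy classes
  have hconj : ∀ (a : ℕ) (u v : G), IsConj u v → IsConj (u ^ a) (v ^ a) := by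
    intro a u v h
    obtain ⟨c, hc⟩ := h
    exact ⟨c, hc.pow_right a⟩
  let Φ : ℕ → ConjClasses G → ConjClasses G := fun a =>
    Quotient.map' (· ^ a) (fun u v h => hconj a u v h)
  have hΦ : ∀ (a : ℕ) (g : G), Φ a (ConjClasses.mk g) = ConjClasses.mk (g ^ a) :=
    fun a g => rfl
  -- the main transfer lemma
  have main : ∀ (a b : ℕ), (∀ g : G, (g ^ a) ^ b = g) → ∀ (u v : G),
      ((QuotientGroup.mk u : G ⧸ H) ^ a = QuotientGroup.mk v) → ∀ C : ConjClasses G,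
      (C.carrier ⊆ {g : G | (QuotientGroup.mk g : G ⧸ H) = QuotientGroup.mk u} ∧
        ∀ g ∈ C.carrier, H ⊔ Subgroup.centralizer {g} = K) →
      ((Φ a C).carrier ⊆ {g : G | (QuotientGroup.mk g : G ⧸ H) = QuotientGroup.mk v} ∧
        ∀ g ∈ (Φ a C).carrier, H ⊔ Subgroup.centralizer {g} = K) := by
    intro a b hab u v huv C hC
    obtain ⟨g, rfl⟩ := ConjClasses.mk_surjective C
    rw [hΦ]
    have decomp : ∀ h : G, h ∈ (ConjClasses.mk (g ^ a)).carrier →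
        ∃ g' : G, g' ∈ (ConjClasses.mk g).carrier ∧ h = g' ^ a := by
      intro h hh
      rw [ConjClasses.mem_carrier_iff_mk_eq] at hh
      have : IsConj (g ^ a) h := ConjClasses.mk_eq_mk_iff_isConj.1 hh.symm
      obtain ⟨c, hc⟩ := (isConj_iff).1 this
      refine ⟨c * g * c⁻¹, ?_, ?_⟩
      · rw [ConjClasses.mem_carrier_iff_mk_eq]
        exact (ConjClasses.mk_eq_mk_iff_isConj.2 (isConj_iff.2 ⟨c, rfl⟩)).symm
      · rw [conj_pow, hc]
    constructor
    · intro h hh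
      obtain ⟨g', hg', rfl⟩ := decomp h hh
      have h1 : (QuotientGroup.mk g' : G ⧸ H) = QuotientGroup.mk u := hC.1 hg'
      show (QuotientGroup.mk (g' ^ a) : G ⧸ H) = QuotientGroup.mk v
      calc (QuotientGroup.mk (g' ^ a) : G ⧸ H) = (QuotientGroup.mk g' : G ⧸ H) ^ a := by
            rfl
        _ = (QuotientGroup.mk u : G ⧸ H) ^ a := by rw [h1]
        _ = QuotientGroup.mk v := huv
    · intro h hh
      obtain ⟨g', hg', rfl⟩ := decomp h hh
      rw [centralizer_pow_eq a b hab g']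
      exact hC.2 g' hg'
  -- construct the bijection
  refine Nat.card_congr ⟨fun C => ⟨Φ m C.1, main m m' hidG x y hxy C.1 C.2⟩,
    fun C => ⟨Φ m' C.1, main m' m hidG' y x hyx' C.1 C.2⟩, ?_, ?_⟩
  · rintro ⟨C, hC⟩
    apply Subtype.ext
    obtain ⟨g, rfl⟩ := ConjClasses.mk_surjective C
    show Φ m' (Φ m (ConjClasses.mk g)) = ConjClasses.mk g
    rw [hΦ, hΦ, hidG]
  · rintro ⟨C, hC⟩
    apply Subtype.ext
    obtain ⟨g, rfl⟩ := ConjClasses.mk_surjective C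
    show Φ m (Φ m' (ConjClasses.mk g)) = ConjClasses.mk g
    rw [hΦ, hΦ, hidG']
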